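/- Two-state problem, intermediate regime: let 0 ≤ γ < 1, let N be the 2×2 real symmetric matrix with diagonal entries 1 and off-diagonal entries −γ, and let η_1, η_2 > 0 with η_1 + η_2 = 1. If γ² η_1 ≤ η_2 and γ² η_2 ≤ η_1 (i.e., γ ≤ √(η_2/η_1) ≤ 1/γ), then the maximum of η_1 x_1 + η_2 x_2 over x ∈ ℝ² with x_1, x_2 ≥ 0 and N − diag(x) positive semidefinite equals 1 − 2√(η_1 η_2) γ, and it is attained at x_1 = 1 − √(η_2/η_1) γ, x_2 = 1 − √(η_1/η_2) γ. -/

import Mathlib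

lemma quad_nonneg (a b γ v0 v1 : ℝ) (ha : 0 ≤ a) (hb : 0 ≤ b) (hab : γ^2 ≤ a*b) :
    0 ≤ a * v0 ^ 2 - 2*γ * v0 * v1 + b * v1 ^ 2 := by
  rcases eq_or_lt_of_le ha with h | h
  · have hγ : γ = 0 := by nlinarith [sq_nonneg γ]
    have ha0 : a = 0 := h.symm
    subst hγ ha0
    nlinarith [mul_nonneg hb (sq_nonneg v1)]
  · have h1 := sq_nonneg (a * v0 - γ * v1)
    have h2 : 0 ≤ (a*b - γ^2) * v1^2 :=
      mul_nonneg (by linarith) (sq_nonneg v1)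
    nlinarith

lemma psd2 (a b γ : ℝ) (ha : 0 ≤ a) (hb : 0 ≤ b) (hab : γ^2 ≤ a*b) :
    (!![a, -γ; -γ, b]).PosSemidef := by
  rw [Matrix.posSemidef_iff_dotProduct_mulVec]
  constructor
  · ext i j
    fin_cases i <;> fin_cases j <;> simp [Matrix.IsHermitian]
  · intro v
    have h : dotProduct (star v) (!![a, -γ; -γ, b].mulVec v) =
        a * v 0 ^ 2 - 2*γ * v 0 * v 1 + b * v 1 ^ 2 := by
      simp [Matrix.mulVec, dotProduct, Fin.sum_univ_two]
      ring
    rw [h]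
    exact quad_nonneg a b γ (v 0) (v 1) ha hb hab

lemma psd2' (a b γ : ℝ) (h : (!![a, -γ; -γ, b]).PosSemidef) :
    0 ≤ a ∧ 0 ≤ b ∧ γ^2 ≤ a*b := by
  have key : ∀ v : Fin 2 → ℝ, 0 ≤ a * v 0 ^ 2 - 2*γ * v 0 * v 1 + b * v 1 ^ 2 := by
    intro v
    have h2 := h.dotProduct_mulVec_nonneg v
    have heq : dotProduct (star v) (!![a, -γ; -γ, b].mulVec v) =
        a * v 0 ^ 2 - 2*γ * v 0 * v 1 + b * v 1 ^ 2 := by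
      simp [Matrix.mulVec, dotProduct, Fin.sum_univ_two]
      ring
    linarith [heq ▸ h2]
  have ha : 0 ≤ a := by have := key ![1, 0]; simpa using this
  have hb : 0 ≤ b := by have := key ![0, 1]; simpa using this
  refine ⟨ha, hb, ?_⟩
  rcases eq_or_lt_of_le ha with h' | h'
  · have hγ : γ = 0 := by
      by_contra hγ
      have hk := key ![(b + 1)/(2*γ), 1]
      simp only [Matrix.cons_val_zero, Matrix.cons_val_one, Matrix.head_cons] at hk
      have hc : 2*γ*((b+1)/(2*γ)) = b + 1 := by field_simp
      nlinarith [hk]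
    subst hγ
    nlinarith [mul_nonneg ha hb]
  · have := key ![γ, a]
    simp only [Matrix.cons_val_zero, Matrix.cons_val_one, Matrix.head_cons] at this
    nlinarith

lemma sub_diag (γ : ℝ) (x : Fin 2 → ℝ) :
    !![1, -γ; -γ, 1] - Matrix.diagonal x = !![1 - x 0, -γ; -γ, 1 - x 1] := by
  ext i j
  fin_cases i <;> fin_cases j <;>
    simp [Matrix.diagonal]

/-- Two-state unambiguous discrimination, intermediate regime
`γ ≤ √(η₂/η₁) ≤ 1/γ`: the maximum success probability is
`1 - 2√(η₁η₂) γ`, attained at `x₁ = 1 - √(η₂/η₁) γ`, `x₂ = 1 - √(η₁/η₂) γ`. -/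
theorem two_state_intermediate
    (γ η₁ η₂ : ℝ) (hγ0 : 0 ≤ γ) (hγ1 : γ < 1)
    (hη₁ : 0 < η₁) (hη₂ : 0 < η₂) (hsum : η₁ + η₂ = 1)
    (h1 : γ ^ 2 * η₁ ≤ η₂) (h2 : γ ^ 2 * η₂ ≤ η₁) :
    IsGreatest {p : ℝ | ∃ x : Fin 2 → ℝ, 0 ≤ x 0 ∧ 0 ≤ x 1 ∧
        (!![1, -γ; -γ, 1] - Matrix.diagonal x).PosSemidef ∧
        p = η₁ * x 0 + η₂ * x 1}
      (1 - 2 * Real.sqrt (η₁ * η₂) * γ) ∧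
    (0 ≤ 1 - Real.sqrt (η₂ / η₁) * γ ∧ 0 ≤ 1 - Real.sqrt (η₁ / η₂) * γ ∧
      (!![1, -γ; -γ, 1] -
        Matrix.diagonal ![1 - Real.sqrt (η₂ / η₁) * γ,
          1 - Real.sqrt (η₁ / η₂) * γ]).PosSemidef ∧
      η₁ * (1 - Real.sqrt (η₂ / η₁) * γ) + η₂ * (1 - Real.sqrt (η₁ / η₂) * γ) =
        1 - 2 * Real.sqrt (η₁ * η₂) * γ) := by
  -- key facts about sqrt quantities
  have hx0 : 0 ≤ 1 - Real.sqrt (η₂ / η₁) * γ := by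
    have : Real.sqrt (η₂ / η₁) * γ = Real.sqrt (η₂ / η₁ * γ ^ 2) := by
      rw [Real.sqrt_mul (by positivity), Real.sqrt_sq hγ0]
    rw [this]
    have harg : η₂ / η₁ * γ ^ 2 ≤ 1 := by
      rw [div_mul_eq_mul_div, div_le_one hη₁]
      nlinarith
    linarith [Real.sqrt_le_one.mpr harg]
  have hx1 : 0 ≤ 1 - Real.sqrt (η₁ / η₂) * γ := by
    have : Real.sqrt (η₁ / η₂) * γ = Real.sqrt (η₁ / η₂ * γ ^ 2) := by
      rw [Real.sqrt_mul (by positivity), Real.sqrt_sq hγ0]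
    rw [this]
    have harg : η₁ / η₂ * γ ^ 2 ≤ 1 := by
      rw [div_mul_eq_mul_div, div_le_one hη₂]
      nlinarith
    linarith [Real.sqrt_le_one.mpr harg]
  have hprod : Real.sqrt (η₂ / η₁) * γ * (Real.sqrt (η₁ / η₂) * γ) = γ ^ 2 := by
    have : Real.sqrt (η₂ / η₁) * Real.sqrt (η₁ / η₂) = 1 := by
      rw [← Real.sqrt_mul (by positivity)]
      rw [show η₂ / η₁ * (η₁ / η₂) = 1 by field_simp]
      exact Real.sqrt_one
    nlinarith [this]
  have hval1 : η₁ * Real.sqrt (η₂ / η₁) = Real.sqrt (η₁ * η₂) := by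
    rw [show η₁ * Real.sqrt (η₂ / η₁) = Real.sqrt (η₁^2) * Real.sqrt (η₂ / η₁) by
        rw [Real.sqrt_sq hη₁.le],
      ← Real.sqrt_mul (by positivity)]
    congr 1
    field_simp
  have hval2 : η₂ * Real.sqrt (η₁ / η₂) = Real.sqrt (η₁ * η₂) := by
    rw [show η₂ * Real.sqrt (η₁ / η₂) = Real.sqrt (η₂^2) * Real.sqrt (η₁ / η₂) by
        rw [Real.sqrt_sq hη₂.le],
      ← Real.sqrt_mul (by positivity)]
    congr 1
    field_simp
  have hvalue : η₁ * (1 - Real.sqrt (η₂ / η₁) * γ) + η₂ * (1 - Real.sqrt (η₁ / η₂) * γ) =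
      1 - 2 * Real.sqrt (η₁ * η₂) * γ := by
    have : η₁ * (Real.sqrt (η₂/η₁) * γ) + η₂ * (Real.sqrt (η₁/η₂) * γ)
        = 2 * Real.sqrt (η₁ * η₂) * γ := by
      rw [show η₁ * (Real.sqrt (η₂/η₁) * γ) = η₁ * Real.sqrt (η₂/η₁) * γ by ring,
        show η₂ * (Real.sqrt (η₁/η₂) * γ) = η₂ * Real.sqrt (η₁/η₂) * γ by ring,
        hval1, hval2]
      ring
    linarith [this, hsum]
  have hpsdw : (!![1, -γ; -γ, 1] -
      Matrix.diagonal ![1 - Real.sqrt (η₂ / η₁) * γ,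
        1 - Real.sqrt (η₁ / η₂) * γ]).PosSemidef := by
    rw [sub_diag]
    simp only [Matrix.cons_val_zero, Matrix.cons_val_one, Matrix.head_cons]
    rw [show (1:ℝ) - (1 - Real.sqrt (η₂/η₁) * γ) = Real.sqrt (η₂/η₁) * γ from by ring,
       show (1:ℝ) - (1 - Real.sqrt (η₁/η₂) * γ) = Real.sqrt (η₁/η₂) * γ from by ring]
    exact psd2 _ _ _ (mul_nonneg (Real.sqrt_nonneg _) hγ0)
      (mul_nonneg (Real.sqrt_nonneg _) hγ0) (le_of_eq hprod.symm)
  have hmem : (1 - 2 * Real.sqrt (η₁ * η₂) * γ) ∈ {p : ℝ | ∃ x : Fin 2 → ℝ, 0 ≤ x 0 ∧ 0 ≤ x 1 ∧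
        (!![1, -γ; -γ, 1] - Matrix.diagonal x).PosSemidef ∧
        p = η₁ * x 0 + η₂ * x 1} := by
    refine ⟨![1 - Real.sqrt (η₂ / η₁) * γ, 1 - Real.sqrt (η₁ / η₂) * γ], ?_, ?_, hpsdw, ?_⟩
    · simpa using hx0
    · simpa using hx1
    · simp only [Matrix.cons_val_zero, Matrix.cons_val_one, Matrix.head_cons]
      exact hvalue.symm
  refine ⟨⟨hmem, ?_⟩, hx0, hx1, hpsdw, hvalue⟩
  rintro p ⟨x, hx0', hx1', hpsd, rfl⟩
  rw [sub_diag] at hpsd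
  obtain ⟨ha, hb, hab⟩ := psd2' _ _ _ hpsd
  set a := 1 - x 0 with hadef
  set b := 1 - x 1 with hbdef
  clear_value a b
  have key : 2 * Real.sqrt (η₁ * η₂) * γ ≤ η₁ * a + η₂ * b := by
    have s1 : Real.sqrt (η₁ * η₂ * γ ^ 2) = Real.sqrt (η₁ * η₂) * γ := by
      rw [Real.sqrt_mul (by positivity), Real.sqrt_sq hγ0]
    have s2 : η₁ * η₂ * γ ^ 2 ≤ (η₁ * a) * (η₂ * b) := by
      have := mul_le_mul_of_nonneg_left hab (by positivity : (0:ℝ) ≤ η₁ * η₂)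
      nlinarith
    have s3 : Real.sqrt ((η₁ * a) * (η₂ * b)) ≤ (η₁ * a + η₂ * b) / 2 := by
      have h4 : (η₁ * a) * (η₂ * b) ≤ ((η₁ * a + η₂ * b) / 2) ^ 2 := by
        nlinarith [sq_nonneg (η₁ * a - η₂ * b)]
      calc Real.sqrt ((η₁ * a) * (η₂ * b)) ≤ Real.sqrt (((η₁ * a + η₂ * b) / 2) ^ 2) :=
            Real.sqrt_le_sqrt h4
        _ = (η₁ * a + η₂ * b) / 2 := Real.sqrt_sq (by positivity)
    have s4 : Real.sqrt (η₁ * η₂ * γ ^ 2) ≤ Real.sqrt ((η₁ * a) * (η₂ * b)) :=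
      Real.sqrt_le_sqrt s2
    linarith
  have hval : η₁ * x 0 + η₂ * x 1 = 1 - (η₁ * a + η₂ * b) := by
    rw [hadef, hbdef]; ring_nf; nlinarith [hsum]
  rw [hval]
  linarith
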